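/- Let p ∈ A be a monic irreducible polynomial and A_{(p)} the localization of A at the prime ideal (p). Let exp_{C̃} act on K[[z]] by exp_{C̃}(Σ_m c_m z^m) = Σ_{i≥0} D_i^{−1} z^i Σ_m c_m^{q^i} z^m. Then exp_{C̃} maps p·A_{(p)}[[z]] bijectively onto p·A_{(p)}[[z]]. -/

import Mathlib

/-!
Let `p ∈ A = Fq[θ]` be monic irreducible and `A_{(p)}` the localization of `A` at `(p)`.
The operator `exp_{C̃} = ∑_{i≥0} D_i⁻¹ z^i τ^i` on `K[[z]]` (with `K = Fq(θ)` and `τ` the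
coefficientwise `q`-power map) maps `p·A_{(p)}[[z]]` bijectively onto `p·A_{(p)}[[z]]`.
-/

noncomputable section

open Polynomial

variable (Fq : Type) [Field Fq] [Fintype Fq]

/-- The Carlitz factorials `D_i ∈ A`. -/
def DcarA (i : ℕ) : Polynomial Fq :=
  ∏ k ∈ Finset.range i,
    ((Polynomial.X : Polynomial Fq) ^ (Fintype.card Fq) ^ i
      - Polynomial.X ^ (Fintype.card Fq) ^ k)

/-- `exp_{C̃}(∑_m c_m z^m) = ∑_{i≥0} D_i⁻¹ z^i ∑_m c_m^{q^i} z^m` on `K[[z]]`,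
defined coefficientwise. -/
def expTildeC (f : PowerSeries (RatFunc Fq)) : PowerSeries (RatFunc Fq) :=
  PowerSeries.mk fun m =>
    ∑ i ∈ Finset.range (m + 1),
      (algebraMap (Polynomial Fq) (RatFunc Fq) (DcarA Fq i))⁻¹ *
        (PowerSeries.coeff (m - i) f) ^ (Fintype.card Fq) ^ i

/-- `x ∈ p·A_{(p)} ⊆ K`, i.e. `x = p·a/b` with `a, b ∈ A`, `p ∤ b`. -/
def MemPLoc (p : Polynomial Fq) (x : RatFunc Fq) : Prop :=
  ∃ a b : Polynomial Fq, ¬ p ∣ b ∧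
    algebraMap (Polynomial Fq) (RatFunc Fq) b * x =
      algebraMap (Polynomial Fq) (RatFunc Fq) (p * a)

/-- `p·A_{(p)}[[z]]`: power series all of whose coefficients lie in `p·A_{(p)}`. -/
def PLocSeries (p : Polynomial Fq) : Set (PowerSeries (RatFunc Fq)) :=
  {f | ∀ m, MemPLoc Fq p (PowerSeries.coeff m f)}

section Aux

variable {Fq}

lemma geom_le' (i : ℕ) :
    (∑ k ∈ Finset.range i, (Fintype.card Fq) ^ k) + 1 ≤ (Fintype.card Fq) ^ i := by
  induction i with
  | zero => simp
  | succ n ih =>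
      rw [Finset.sum_range_succ, pow_succ]
      have h2 : 2 ≤ Fintype.card Fq := Fintype.one_lt_card
      nlinarith [pow_pos (by omega : 0 < Fintype.card Fq) n]

lemma squarefree_aux (m : ℕ) (hm : 1 ≤ m) :
    Squarefree ((X : Polynomial Fq) ^ (Fintype.card Fq) ^ m - X) := by
  apply Polynomial.Separable.squarefree
  unfold Polynomial.Separable
  have hd : derivative ((X : Polynomial Fq) ^ (Fintype.card Fq) ^ m - X) = -1 := by
    rw [derivative_sub, derivative_X_pow, derivative_X]
    have : ((Fintype.card Fq : Fq) : Fq) ^ m = 0 := by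
      rw [FiniteField.cast_card_eq_zero, zero_pow (by omega)]
    simp [Nat.cast_pow, this]; omega
  rw [hd]
  exact ⟨0, -1, by ring⟩

lemma frob_factor {i k : ℕ} (hk : k ≤ i) :
    (X : Polynomial Fq) ^ (Fintype.card Fq) ^ i - X ^ (Fintype.card Fq) ^ k
      = ((X : Polynomial Fq) ^ (Fintype.card Fq) ^ (i - k) - X) ^ (Fintype.card Fq) ^ k := by
  set q := Fintype.card Fq with hq
  obtain ⟨n, hr, hcard⟩ := FiniteField.card Fq (ringChar Fq)
  haveI : Fact (ringChar Fq).Prime := ⟨hr⟩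
  haveI : CharP (Polynomial Fq) (ringChar Fq) := Polynomial.instCharP _
  have hqk : q ^ k = (ringChar Fq) ^ ((n : ℕ) * k) := by
    rw [hq, hcard, pow_mul]
  rw [hqk, sub_pow_char_pow, ← pow_mul, ← hqk, ← pow_add, Nat.sub_add_cancel hk]

lemma factor_exists {p : Polynomial Fq} (hp : Irreducible p) {i k : ℕ} (hk : k < i) :
    ∃ v u : _, ((X : Polynomial Fq) ^ (Fintype.card Fq) ^ i - X ^ (Fintype.card Fq) ^ k)
      = p ^ v * u ∧ ¬ p ∣ u ∧ v ≤ (Fintype.card Fq) ^ k := by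
  have hm : 1 ≤ i - k := by omega
  set q := Fintype.card Fq with hq
  have hg0 : ((X : Polynomial Fq) ^ q ^ (i - k) - X) ≠ 0 := by
    intro h
    have := congrArg (fun P => Polynomial.coeff P (q ^ (i - k))) h
    have h2 : 2 ≤ q := Fintype.one_lt_card
    have hne : q ^ (i - k) ≠ 1 := by
      have : 2 ≤ q ^ (i - k) := by
        calc 2 ≤ q := h2
        _ = q ^ 1 := (pow_one q).symm
        _ ≤ q ^ (i - k) := Nat.pow_le_pow_right (by omega) hm
      omega
    simp [Polynomial.coeff_X_pow, Polynomial.coeff_X, hne, Ne.symm hne] at this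
  obtain ⟨w, u, hu, hgu⟩ := WfDvdMonoid.max_power_factor hg0 hp
  have hw1 : w ≤ 1 := by
    by_contra h
    have hdvd : p * p ∣ (X : Polynomial Fq) ^ q ^ (i - k) - X := by
      rw [hgu]
      refine Dvd.dvd.mul_right ⟨p ^ (w - 2), ?_⟩ u
      nth_rewrite 1 [show w = 2 + (w - 2) by omega]
      rw [pow_add]; ring
    exact hp.not_isUnit (squarefree_aux (i - k) hm p hdvd)
  refine ⟨w * q ^ k, u ^ q ^ k, ?_, ?_, ?_⟩
  · rw [frob_factor (le_of_lt hk), hgu, mul_pow, ← pow_mul]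
  · exact fun h => hu (hp.prime.dvd_of_dvd_pow h)
  · calc w * q ^ k ≤ 1 * q ^ k := Nat.mul_le_mul_right _ hw1
      _ = q ^ k := one_mul _

lemma D_factor {p : Polynomial Fq} (hp : Irreducible p) (i : ℕ) :
    ∃ v u : _, DcarA Fq i = p ^ v * u ∧ ¬ p ∣ u ∧ v + 1 ≤ (Fintype.card Fq) ^ i := by
  have key : ∀ j ≤ i, ∃ v u : _,
      (∏ k ∈ Finset.range j, ((X : Polynomial Fq) ^ (Fintype.card Fq) ^ i
        - X ^ (Fintype.card Fq) ^ k)) = p ^ v * u ∧ ¬ p ∣ u ∧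
        v ≤ ∑ k ∈ Finset.range j, (Fintype.card Fq) ^ k := by
    intro j
    induction j with
    | zero => exact fun _ => ⟨0, 1, by simp, fun h => hp.not_isUnit (isUnit_of_dvd_one h), by simp⟩
    | succ n ih =>
        intro hn
        obtain ⟨v, u, hP, hu, hv⟩ := ih (by omega)
        obtain ⟨w, t, hF, ht, hw⟩ := factor_exists hp (show n < i by omega)
        exact ⟨v + w, u * t, by rw [Finset.prod_range_succ, hP, hF]; ring,
          fun h => ((hp.prime.dvd_mul).mp h).elim hu ht,
          by rw [Finset.sum_range_succ]; omega⟩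
  obtain ⟨v, u, hP, hu, hv⟩ := key i le_rfl
  exact ⟨v, u, hP, hu, by have := @geom_le' Fq _ _ i; omega⟩

lemma memPLoc_zero {p : Polynomial Fq} (hp : Irreducible p) : MemPLoc Fq p 0 :=
  ⟨0, 1, fun h => hp.not_isUnit (isUnit_of_dvd_one h), by simp⟩

lemma memPLoc_add {p : Polynomial Fq} (hp : Irreducible p) {x y : RatFunc Fq}
    (hx : MemPLoc Fq p x) (hy : MemPLoc Fq p y) : MemPLoc Fq p (x + y) := by
  obtain ⟨a, b, hb, hbx⟩ := hx
  obtain ⟨c, d, hd, hdy⟩ := hy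
  refine ⟨a * d + c * b, b * d, fun h => ((hp.prime.dvd_mul).mp h).elim hb hd, ?_⟩
  simp only [map_mul, map_add] at hbx hdy ⊢
  linear_combination (algebraMap (Polynomial Fq) (RatFunc Fq) d) * hbx
    + (algebraMap (Polynomial Fq) (RatFunc Fq) b) * hdy

lemma memPLoc_neg {p : Polynomial Fq} {x : RatFunc Fq}
    (hx : MemPLoc Fq p x) : MemPLoc Fq p (-x) := by
  obtain ⟨a, b, hb, hbx⟩ := hx
  refine ⟨-a, b, hb, ?_⟩
  simp only [map_mul, map_neg] at hbx ⊢
  linear_combination -hbx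

lemma memPLoc_sub {p : Polynomial Fq} (hp : Irreducible p) {x y : RatFunc Fq}
    (hx : MemPLoc Fq p x) (hy : MemPLoc Fq p y) : MemPLoc Fq p (x - y) := by
  rw [sub_eq_add_neg]
  exact memPLoc_add hp hx (memPLoc_neg hy)

lemma memPLoc_sum {p : Polynomial Fq} (hp : Irreducible p) {ι : Type*} {s : Finset ι}
    {f : ι → RatFunc Fq} (hf : ∀ i ∈ s, MemPLoc Fq p (f i)) :
    MemPLoc Fq p (∑ i ∈ s, f i) :=
  Finset.sum_induction f (MemPLoc Fq p) (fun _ _ => memPLoc_add hp) (memPLoc_zero hp) hf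

lemma memPLoc_term {p : Polynomial Fq} (hp : Irreducible p) (i : ℕ) {x : RatFunc Fq}
    (hx : MemPLoc Fq p x) :
    MemPLoc Fq p ((algebraMap (Polynomial Fq) (RatFunc Fq) (DcarA Fq i))⁻¹
      * x ^ (Fintype.card Fq) ^ i) := by
  obtain ⟨a, b, hb, hbx⟩ := hx
  obtain ⟨v, u, hD, hu, hv⟩ := D_factor hp i
  set Q := (Fintype.card Fq) ^ i with hQ
  set M := algebraMap (Polynomial Fq) (RatFunc Fq) with hM
  have hp0 : p ≠ 0 := hp.ne_zero
  have hu0 : u ≠ 0 := fun h => hu (h ▸ dvd_zero p)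
  have hMp : M p ≠ 0 := RatFunc.algebraMap_ne_zero hp0
  have hMu : M u ≠ 0 := RatFunc.algebraMap_ne_zero hu0
  refine ⟨a ^ Q * p ^ (Q - 1 - v), b ^ Q * u,
    fun h => ((hp.prime.dvd_mul).mp h).elim (fun hh => hb (hp.prime.dvd_of_dvd_pow hh)) hu, ?_⟩
  have hbxQ : (M b) ^ Q * x ^ Q = (M p) ^ Q * (M a) ^ Q := by
    rw [← mul_pow, hbx, map_mul, mul_pow]
  have hpow : (M p) ^ Q = (M p) ^ v * ((M p) ^ (Q - 1 - v) * M p) := by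
    rw [← pow_succ, ← pow_add]
    congr 1
    omega
  rw [hpow] at hbxQ
  rw [hD]
  simp only [map_mul, map_pow]
  field_simp
  linear_combination (M u) * hbxQ

/-- Recursive solution of `expTildeC f = g`, coefficientwise. -/
def solveSeq (g : ℕ → RatFunc Fq) : ℕ → RatFunc Fq
  | m => g m - (∑ i ∈ (Finset.range m).attach,
      (algebraMap (Polynomial Fq) (RatFunc Fq) (DcarA Fq (i.1 + 1)))⁻¹ *
        (solveSeq g (m - (i.1 + 1))) ^ (Fintype.card Fq) ^ (i.1 + 1) : RatFunc Fq)
  decreasing_by exact Nat.sub_lt_self (Nat.succ_pos _) (Nat.succ_le_of_lt (Finset.mem_range.mp i.2))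

lemma solveSeq_spec (g : ℕ → RatFunc Fq) (m : ℕ) :
    solveSeq g m = g m - ∑ i ∈ Finset.range m,
      (algebraMap (Polynomial Fq) (RatFunc Fq) (DcarA Fq (i + 1)))⁻¹ *
        (solveSeq g (m - (i + 1))) ^ (Fintype.card Fq) ^ (i + 1) := by
  rw [solveSeq]
  congr 1
  exact Finset.sum_attach (Finset.range m) fun i =>
    (algebraMap (Polynomial Fq) (RatFunc Fq) (DcarA Fq (i + 1)))⁻¹ *
      (solveSeq g (m - (i + 1))) ^ (Fintype.card Fq) ^ (i + 1)

lemma expTildeC_coeff (f : PowerSeries (RatFunc Fq)) (m : ℕ) :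
    PowerSeries.coeff m (expTildeC Fq f) = PowerSeries.coeff m f +
      ∑ i ∈ Finset.range m,
        (algebraMap (Polynomial Fq) (RatFunc Fq) (DcarA Fq (i + 1)))⁻¹ *
          (PowerSeries.coeff (m - (i + 1)) f) ^ (Fintype.card Fq) ^ (i + 1) := by
  simp only [expTildeC, PowerSeries.coeff_mk]
  rw [Finset.sum_range_succ']
  have h0 : (algebraMap (Polynomial Fq) (RatFunc Fq) (DcarA Fq 0))⁻¹ *
      (PowerSeries.coeff (m - 0) f) ^ (Fintype.card Fq) ^ 0 = PowerSeries.coeff m f := by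
    simp [DcarA]
  rw [h0, add_comm]

lemma expTildeC_injective : Function.Injective (expTildeC Fq) := by
  intro f g h
  apply PowerSeries.ext
  intro m
  induction m using Nat.strong_induction_on with
  | _ m ih =>
    have h1 := congrArg (PowerSeries.coeff m) h
    rw [expTildeC_coeff, expTildeC_coeff] at h1
    have h2 : ∀ i ∈ Finset.range m,
        (algebraMap (Polynomial Fq) (RatFunc Fq) (DcarA Fq (i + 1)))⁻¹ *
          (PowerSeries.coeff (m - (i + 1)) f) ^ (Fintype.card Fq) ^ (i + 1) =
        (algebraMap (Polynomial Fq) (RatFunc Fq) (DcarA Fq (i + 1)))⁻¹ *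
          (PowerSeries.coeff (m - (i + 1)) g) ^ (Fintype.card Fq) ^ (i + 1) := by
      intro i hi
      rw [ih (m - (i + 1)) (Nat.sub_lt_self (Nat.succ_pos _)
        (Nat.succ_le_of_lt (Finset.mem_range.mp hi)))]
    rw [Finset.sum_congr rfl h2] at h1
    exact add_right_cancel h1

end Aux

/-- `exp_{C̃}` maps `p·A_{(p)}[[z]]` bijectively onto itself. -/
theorem expTildeC_bijOn_pLoc (p : Polynomial Fq) (hp : Irreducible p) (hmonic : p.Monic) :
    Set.BijOn (expTildeC Fq) (PLocSeries Fq p) (PLocSeries Fq p) := by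
  refine ⟨?_, (expTildeC_injective).injOn, ?_⟩
  · intro f hf m
    simp only [expTildeC, PowerSeries.coeff_mk]
    exact memPLoc_sum hp fun i _ => memPLoc_term hp i (hf (m - i))
  · intro g hg
    set f : PowerSeries (RatFunc Fq) := PowerSeries.mk
      (solveSeq (fun m => PowerSeries.coeff m g)) with hf
    have hsol : ∀ m, MemPLoc Fq p (solveSeq (fun m => PowerSeries.coeff m g) m) := by
      intro m
      induction m using Nat.strong_induction_on with
      | _ m ih =>
        rw [solveSeq_spec]
        exact memPLoc_sub hp (hg m) (memPLoc_sum hp fun i hi =>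
          memPLoc_term hp (i + 1) (ih (m - (i + 1)) (Nat.sub_lt_self (Nat.succ_pos _)
            (Nat.succ_le_of_lt (Finset.mem_range.mp hi)))))
    refine ⟨f, fun m => by simpa [hf] using hsol m, ?_⟩
    apply PowerSeries.ext
    intro m
    rw [expTildeC_coeff]
    simp only [hf, PowerSeries.coeff_mk]
    rw [solveSeq_spec]
    ring


end
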